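/- Let Γ ⊂ Λ be full rank lattices in ℝ^n and ε ≥ 0. Suppose D = {d_1,…,d_l} is an ε-approximate transversal of Λ/Γ, i.e., there exist representatives d_1',…,d_l' of the l distinct cosets of Λ/Γ with |d_i − d_i'| ≤ ε for all i. Then for every m ∈ Γ*, the quantity |(1/l) Σ_{i=1}^l exp(2πi⟨m,d_i⟩) − δ| ≤ 2π|m|ε, where δ = 1 if m ∈ Λ* and δ = 0 if m ∈ Γ* \ Λ*. -/

import Mathlib

open scoped BigOperators
open Classical

def IsFullLattice {n : ℕ} (L : AddSubgroup (EuclideanSpace ℝ (Fin n))) : Prop :=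
  ∃ b : Module.Basis (Fin n) ℝ (EuclideanSpace ℝ (Fin n)),
    L = AddSubgroup.closure (Set.range b)

def dualSet {n : ℕ} (S : Set (EuclideanSpace ℝ (Fin n))) : Set (EuclideanSpace ℝ (Fin n)) :=
  {x | ∀ g ∈ S, ∃ k : ℤ, (inner ℝ x g : ℝ) = (k : ℝ)}

lemma exp_I_dist (x y : ℝ) :
    ‖Complex.exp (x * Complex.I) - Complex.exp (y * Complex.I)‖ ≤ |x - y| := by
  have key : ∀ t : ℝ, ‖Complex.exp (t * Complex.I) - 1‖ ≤ |t| := by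
    intro t
    have h1 : Complex.exp ((t:ℂ) * Complex.I) - 1 =
        Complex.exp ((t/2 : ℝ) * Complex.I) * (2 * Complex.I * Complex.sin ((t/2 : ℝ))) := by
      have hsin : (2 : ℂ) * Complex.I * Complex.sin ((t/2 : ℝ)) =
          Complex.exp ((t/2:ℝ) * Complex.I) - Complex.exp (-((t/2:ℝ) * Complex.I)) := by
        rw [Complex.sin]
        ring_nf
        rw [Complex.I_sq]
        ring
      rw [hsin, mul_sub, ← Complex.exp_add, ← Complex.exp_add]
      push_cast
      ring_nf
      simp
      ring
    rw [h1, norm_mul]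
    rw [Complex.norm_exp]
    simp only [Complex.mul_re, Complex.ofReal_re, Complex.I_re, Complex.ofReal_im, Complex.I_im]
    rw [← Complex.ofReal_sin]
    simp only [mul_zero, zero_mul, sub_zero, mul_one, zero_sub]
    rw [Real.exp_zero]
    simp only [norm_mul, Complex.norm_two, Complex.norm_I, Complex.norm_real, Real.norm_eq_abs, one_mul, mul_one]
    calc 2 * |Real.sin (t/2)| ≤ 2 * |t/2| := by
          have := Real.abs_sin_le_abs (x := t/2); linarith
      _ = |t| := by rw [abs_div]; simp; ring
  have h2 : Complex.exp ((x:ℂ) * Complex.I) - Complex.exp ((y:ℂ) * Complex.I) =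
      Complex.exp ((y:ℂ) * Complex.I) * (Complex.exp (((x - y : ℝ):ℂ) * Complex.I) - 1) := by
    rw [mul_sub, ← Complex.exp_add, mul_one]
    push_cast; ring_nf
  rw [h2, norm_mul, Complex.norm_exp]
  simp only [Complex.mul_re, Complex.ofReal_re, Complex.I_re, Complex.ofReal_im, Complex.I_im,
    mul_zero, zero_mul, sub_zero, mul_one, zero_sub]
  simpa using key (x - y)

noncomputable def eA (a : ℝ) : ℂ := Complex.exp (2 * Real.pi * Complex.I * (a : ℂ))

lemma eA_dist (a b : ℝ) : ‖eA a - eA b‖ ≤ 2 * Real.pi * |a - b| := by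
  have h := exp_I_dist (2 * Real.pi * a) (2 * Real.pi * b)
  have e1 : ((2 * Real.pi * a : ℝ) : ℂ) * Complex.I = 2 * Real.pi * Complex.I * (a : ℂ) := by
    push_cast; ring
  have e2 : ((2 * Real.pi * b : ℝ) : ℂ) * Complex.I = 2 * Real.pi * Complex.I * (b : ℂ) := by
    push_cast; ring
  rw [e1, e2] at h
  refine h.trans_eq ?_
  rw [show 2 * Real.pi * a - 2 * Real.pi * b = 2 * Real.pi * (a - b) by ring, abs_mul,
    abs_of_nonneg (by positivity : (0:ℝ) ≤ 2 * Real.pi)]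

lemma eA_add (a b : ℝ) : eA (a + b) = eA a * eA b := by
  unfold eA; rw [← Complex.exp_add]; push_cast; ring_nf

lemma eA_int (k : ℤ) : eA k = 1 := by
  unfold eA
  rw [show 2 * (Real.pi:ℂ) * Complex.I * ((k:ℝ):ℂ) = (k:ℤ) * (2 * Real.pi * Complex.I) by push_cast; ring]
  exact Complex.exp_int_mul_two_pi_mul_I k

lemma eA_ne_one {a : ℝ} (ha : ∀ k : ℤ, a ≠ k) : eA a ≠ 1 := by
  intro h
  rw [eA, Complex.exp_eq_one_iff] at h
  obtain ⟨k, hk⟩ := h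
  have h2 : (a : ℂ) = (k : ℂ) := by
    have hne : ((2:ℂ) * Real.pi * Complex.I) ≠ 0 := by
      have : (Real.pi : ℂ) ≠ 0 := Complex.ofReal_ne_zero.mpr Real.pi_ne_zero
      simp [this, Complex.I_ne_zero]
    have h3 : (a:ℂ) * (2 * Real.pi * Complex.I) = (k:ℂ) * (2 * Real.pi * Complex.I) := by
      linear_combination hk
    exact mul_right_cancel₀ hne h3
  exact ha k (by exact_mod_cast h2)
/-- averaging exponentials over an `ε`-approximate transversal of `Λ/Γ`. -/
theorem stmt1 {n l : ℕ} (hl : 0 < l) (ε : ℝ) (hε : 0 ≤ ε)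
    (Γ Λ : AddSubgroup (EuclideanSpace ℝ (Fin n)))
    (hΓ : IsFullLattice Γ) (hΛ : IsFullLattice Λ) (hsub : Γ ≤ Λ)
    (d d' : Fin l → EuclideanSpace ℝ (Fin n))
    -- `d'` is an exact transversal of `Λ/Γ`
    (hmem : ∀ i, d' i ∈ Λ)
    (hdistinct : ∀ i j, i ≠ j → d' i - d' j ∉ Γ)
    (hcover : ∀ x ∈ Λ, ∃ i, x - d' i ∈ Γ)
    -- `d` is `ε`-close to `d'`
    (happrox : ∀ i, ‖d i - d' i‖ ≤ ε)
    (m : EuclideanSpace ℝ (Fin n)) (hm : m ∈ dualSet (Γ : Set _)) :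
    ‖(1 / (l : ℂ)) * ∑ i : Fin l,
        Complex.exp (2 * Real.pi * Complex.I * ((inner ℝ m (d i) : ℝ) : ℂ)) -
        (if m ∈ dualSet (Λ : Set _) then 1 else 0)‖ ≤ 2 * Real.pi * ‖m‖ * ε := by
  have hlC : (l : ℂ) ≠ 0 := Nat.cast_ne_zero.mpr hl.ne'
  set S' : ℂ := ∑ i : Fin l, eA (inner ℝ m (d' i) : ℝ) with hS'
  -- exact average equals the delta
  have hexact : (1 / (l : ℂ)) * S' = (if m ∈ dualSet (Λ : Set _) then 1 else 0) := by
    by_cases hmΛ : m ∈ dualSet (Λ : Set _)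
    · rw [if_pos hmΛ]
      have h1 : ∀ i : Fin l, eA (inner ℝ m (d' i) : ℝ) = 1 := by
        intro i
        obtain ⟨k, hk⟩ := hmΛ (d' i) (hmem i)
        rw [hk]; exact eA_int k
      have : S' = (l : ℂ) := by
        rw [hS', Finset.sum_congr rfl fun i _ => h1 i, Finset.sum_const]; simp
      rw [this]; field_simp
    · rw [if_neg hmΛ]
      -- nontrivial character: find g ∈ Λ with non-integer pairing
      simp only [dualSet, Set.mem_setOf_eq, not_forall] at hmΛ
      obtain ⟨g, hgΛ, hg⟩ := hmΛ
      push_neg at hg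
      have hc : eA (inner ℝ m g : ℝ) ≠ 1 := eA_ne_one hg
      -- the permutation
      choose f hchoice using fun i : Fin l => hcover (d' i + g) (Λ.add_mem (hmem i) hgΛ)
      have hinj : Function.Injective f := by
        intro i j hij
        by_contra hne
        apply hdistinct i j hne
        have h1 := hchoice i
        have h2 := hchoice j
        rw [hij] at h1
        have h3 := Γ.sub_mem h1 h2
        have heq : (d' i + g - d' (f j)) - (d' j + g - d' (f j)) = d' i - d' j := by abel
        rwa [heq] at h3
      have hbij : Function.Bijective f := Finite.injective_iff_bijective.mp hinj
      -- character relation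
      have hrel : ∀ i : Fin l, eA (inner ℝ m (d' (f i)) : ℝ) =
          eA (inner ℝ m g : ℝ) * eA (inner ℝ m (d' i) : ℝ) := by
        intro i
        obtain ⟨k, hk⟩ := hm _ (hchoice i)
        rw [inner_sub_right, inner_add_right] at hk
        have hx : (inner ℝ m (d' (f i)) : ℝ) =
            ((inner ℝ m (d' i) : ℝ) + (inner ℝ m g : ℝ)) + (-k : ℤ) := by
          push_cast; linarith
        rw [hx, eA_add, eA_int, mul_one, eA_add]
        ring
      have hsum : S' = eA (inner ℝ m g : ℝ) * S' := by
        calc S' = ∑ i : Fin l, eA (inner ℝ m (d' (f i)) : ℝ) :=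
              (Function.Bijective.sum_comp hbij (fun j => eA (inner ℝ m (d' j) : ℝ))).symm
          _ = ∑ i : Fin l, eA (inner ℝ m g : ℝ) * eA (inner ℝ m (d' i) : ℝ) :=
              Finset.sum_congr rfl fun i _ => hrel i
          _ = eA (inner ℝ m g : ℝ) * S' := by rw [← Finset.mul_sum]
      have : S' = 0 := by
        by_contra hS0
        apply hc
        have h4 : eA (inner ℝ m g : ℝ) * S' = 1 * S' := by rw [← hsum, one_mul]
        exact mul_right_cancel₀ hS0 h4
      rw [this, mul_zero]
  -- main estimate
  rw [← hexact, ← mul_sub, ← Finset.sum_sub_distrib, norm_mul]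
  have habs1 : ‖1 / (l : ℂ)‖ = 1 / (l : ℝ) := by
    rw [norm_div, norm_one, Complex.norm_natCast]
  rw [habs1]
  have hterm : ∀ i : Fin l, ‖eA (inner ℝ m (d i) : ℝ) - eA (inner ℝ m (d' i) : ℝ)‖ ≤
      2 * Real.pi * ‖m‖ * ε := by
    intro i
    refine (eA_dist _ _).trans ?_
    have h1 : (inner ℝ m (d i) : ℝ) - (inner ℝ m (d' i) : ℝ) = (inner ℝ m (d i - d' i) : ℝ) := by
      rw [inner_sub_right]
    rw [h1]
    have h2 : |(inner ℝ m (d i - d' i) : ℝ)| ≤ ‖m‖ * ‖d i - d' i‖ := abs_real_inner_le_norm _ _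
    have h3 : ‖m‖ * ‖d i - d' i‖ ≤ ‖m‖ * ε :=
      mul_le_mul_of_nonneg_left (happrox i) (norm_nonneg _)
    have hπ : (0:ℝ) < 2 * Real.pi := by positivity
    nlinarith [Real.pi_pos, abs_nonneg (inner ℝ m (d i - d' i) : ℝ)]
  calc (1 / (l:ℝ)) * ‖∑ i : Fin l,
          (eA (inner ℝ m (d i) : ℝ) - eA (inner ℝ m (d' i) : ℝ))‖
      ≤ (1 / (l:ℝ)) * ∑ i : Fin l,
          ‖eA (inner ℝ m (d i) : ℝ) - eA (inner ℝ m (d' i) : ℝ)‖ := by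
        apply mul_le_mul_of_nonneg_left _ (by positivity)
        have := norm_sum_le (Finset.univ : Finset (Fin l))
          (fun i => eA (inner ℝ m (d i) : ℝ) - eA (inner ℝ m (d' i) : ℝ))
        simpa using this
    _ ≤ (1 / (l:ℝ)) * ∑ _i : Fin l, (2 * Real.pi * ‖m‖ * ε) := by
        apply mul_le_mul_of_nonneg_left _ (by positivity)
        exact Finset.sum_le_sum fun i _ => hterm i
    _ = 2 * Real.pi * ‖m‖ * ε := by
        rw [Finset.sum_const, Finset.card_univ, Fintype.card_fin, nsmul_eq_mul]
        field_simp
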